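/- arXiv:1011.0351 — 3 statements merged into one kernel-verified Lean document; each statement's English description precedes it below -/
import Mathlib

section
/- For every integer α ≥ 2 and t ≥ 2, the quantity α / log(α^(t-1)/(α^(t-1)-1)) is strictly less than 1 / log(α^t/(α^t-1)). (Here log denotes the natural or base-2 logarithm; the statement is independent of the base.) -/
lemma logdiff_anti {x y : ℝ} (hx : 0 < x) (hxy : x ≤ y) :
    Real.log (y + 1) - Real.log y ≤ Real.log (x + 1) - Real.log x := by
  have hy : 0 < y := lt_of_lt_of_le hx hxy
  rw [← Real.log_div (by positivity) (ne_of_gt hy),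
    ← Real.log_div (by positivity) (ne_of_gt hx)]
  apply Real.log_le_log (by positivity)
  rw [div_le_div_iff₀ hy hx]
  nlinarith

lemma logdiff_anti_strict {x y : ℝ} (hx : 0 < x) (hxy : x < y) :
    Real.log (y + 1) - Real.log y < Real.log (x + 1) - Real.log x := by
  have hy : 0 < y := lt_trans hx hxy
  rw [← Real.log_div (by positivity) (ne_of_gt hy),
    ← Real.log_div (by positivity) (ne_of_gt hx)]
  apply Real.log_lt_log (by positivity)
  rw [div_lt_div_iff₀ hy hx]
  nlinarith

theorem stmt_1 (α t : ℕ) (hα : 2 ≤ α) (ht : 2 ≤ t) :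
    (α : ℝ) / Real.log ((α : ℝ) ^ (t - 1) / ((α : ℝ) ^ (t - 1) - 1)) <
      1 / Real.log ((α : ℝ) ^ t / ((α : ℝ) ^ t - 1)) := by
  set a : ℝ := (α : ℝ) with ha
  have ha2 : (2:ℝ) ≤ a := by rw [ha]; exact_mod_cast hα
  have ha1 : (1:ℝ) < a := by linarith
  set n := t - 1 with hn
  have hn1 : 1 ≤ n := by omega
  have htn : t = n + 1 := by omega
  set A : ℝ := a ^ n with hA
  have hA2 : (2:ℝ) ≤ A := by
    calc (2:ℝ) ≤ a := ha2
    _ = a ^ 1 := (pow_one a).symm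
    _ ≤ a ^ n := pow_le_pow_right₀ (le_of_lt ha1) hn1
  have hBpow : a ^ t = a * A := by rw [htn, hA, pow_succ]; ring
  set B : ℝ := a * A with hBdef
  have hB4 : (4:ℝ) ≤ B := by nlinarith
  have hBa : (2:ℝ) ≤ B - a := by nlinarith
  rw [hBpow]
  set L₁ : ℝ := Real.log (A / (A - 1)) with hL1def
  set L₂ : ℝ := Real.log (B / (B - 1)) with hL2def
  have hL1pos : 0 < L₁ := Real.log_pos ((one_lt_div (by linarith)).mpr (by linarith))
  have hL2pos : 0 < L₂ := Real.log_pos ((one_lt_div (by linarith)).mpr (by linarith))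
  -- key inequality
  have hL1eq : L₁ = Real.log B - Real.log (B - a) := by
    have h1 : B - a = a * (A - 1) := by ring
    rw [hL1def, Real.log_div (by linarith) (by linarith), h1, hBdef,
      Real.log_mul (by linarith) (by linarith), Real.log_mul (by linarith) (by linarith)]
    ring
  have hL2eq : L₂ = Real.log ((B - 1) + 1) - Real.log (B - 1) := by
    rw [hL2def, Real.log_div (by linarith) (by linarith)]
    norm_num
  set f : ℕ → ℝ := fun k => Real.log (B - a + k) with hf
  have tele : ∑ k ∈ Finset.range α, (f (k + 1) - f k) = f α - f 0 :=
    Finset.sum_range_sub f α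
  have hfα : f α = Real.log B := by
    simp only [hf, ← ha]
    ring_nf
  have hf0 : f 0 = Real.log (B - a) := by simp [hf]
  have hterm : ∀ k ∈ Finset.range α, L₂ ≤ f (k + 1) - f k := by
    intro k hk
    have hk' : (k : ℝ) ≤ a - 1 := by
      have : (k : ℝ) + 1 ≤ a := by
        have h2 : k + 1 ≤ α := Finset.mem_range.mp hk
        rw [ha]; exact_mod_cast h2
      linarith
    have hx : (0:ℝ) < B - a + k := by positivity
    have key := logdiff_anti hx (by linarith : B - a + (k:ℝ) ≤ B - 1)
    rw [hL2eq]
    have h1 : f (k + 1) = Real.log ((B - a + k) + 1) := by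
      simp only [hf]; push_cast; ring_nf
    rw [h1]
    exact le_trans key (le_refl _)
  have hterm0 : L₂ < f (0 + 1) - f 0 := by
    have hx : (0:ℝ) < B - a + (0:ℕ) := by norm_num; linarith
    have key := logdiff_anti_strict (by linarith : (0:ℝ) < B - a)
      (by linarith : B - a < B - 1)
    rw [hL2eq]
    have h1 : f (0 + 1) = Real.log ((B - a) + 1) := by
      simp only [hf]; push_cast; ring_nf
    rw [h1, hf0]
    exact key
  have hsum : (α : ℝ) * L₂ < ∑ k ∈ Finset.range α, (f (k + 1) - f k) := by
    have := Finset.sum_lt_sum hterm ⟨0, Finset.mem_range.mpr (by omega), hterm0⟩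
    calc (α : ℝ) * L₂ = ∑ _k ∈ Finset.range α, L₂ := by
          rw [Finset.sum_const, Finset.card_range, nsmul_eq_mul]
    _ < _ := this
  have key : a * L₂ < L₁ := by
    rw [hL1eq, ← hfα, ← hf0, ← tele, ha]
    exact hsum
  rw [div_lt_div_iff₀ hL1pos hL2pos]
  linarith
end

section
/- Fix integers α ≥ 2, t ≥ 2. There is a constant C = α(t-1)/log₂(α^(t-1)/(α^(t-1)-1)) such that for all sufficiently large m, there exists an m × n matrix over an alphabet of size α that is a t-α covering array with n ≤ C·log₂(m)·(1 + o(1)); equivalently, N(m,t,α) ≤ α(t-1)log₂(m)/log₂(α^(t-1)/(α^(t-1)-1)) · (1+o(1)) as m → ∞. -/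
open Filter

/-- `M` is a `t`-`α` covering array: for every choice of `t` distinct rows and every
vector `v`, some column realizes `v` on those rows. -/
def IsCoveringArray (m n α t : ℕ) (M : Fin m → Fin n → Fin α) : Prop :=
  ∀ p : Fin t → Fin m, Function.Injective p →
    ∀ v : Fin t → Fin α, ∃ q : Fin n, ∀ i : Fin t, M (p i) q = v i

lemma good_count_le {α m₀ t : ℕ} (hα : 1 ≤ α) (ht : 1 ≤ t)
    (p : Fin t → Fin m₀) (hp : Function.Injective p) (v : Fin t → ZMod α) :
    α ^ (m₀ - t) * α ≤ Nat.card {c : Fin m₀ → ZMod α // ∃ g, ∀ i, c (p i) + g = v i} := by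
  classical
  haveI : NeZero α := ⟨by omega⟩
  set i0 : Fin t := ⟨0, by omega⟩ with hi0
  have hcardD : Nat.card (ZMod α × (↥(Set.range p)ᶜ → ZMod α)) = α * α ^ (m₀ - t) := by
    have h1 : Fintype.card ↥(Set.range p)ᶜ = m₀ - t := by
      rw [Fintype.card_compl_set, Set.card_range_of_injective hp]
      simp
    rw [Nat.card_eq_fintype_card, Fintype.card_prod, Fintype.card_fun, h1, ZMod.card]
  have key : ∀ gh : ZMod α × (↥(Set.range p)ᶜ → ZMod α), ∀ i : Fin t,
      Function.extend p (fun i => gh.1 + v i - v i0)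
        (fun x => if hx : x ∈ Set.range p then 0 else gh.2 ⟨x, hx⟩) (p i)
        = gh.1 + v i - v i0 := fun gh i => hp.extend_apply _ _ i
  let F : ZMod α × (↥(Set.range p)ᶜ → ZMod α)
      → {c : Fin m₀ → ZMod α // ∃ g, ∀ i, c (p i) + g = v i} := fun gh =>
    ⟨Function.extend p (fun i => gh.1 + v i - v i0)
        (fun x => if hx : x ∈ Set.range p then 0 else gh.2 ⟨x, hx⟩),
      v i0 - gh.1, by intro i; rw [key gh i]; ring⟩
  have hF : Function.Injective F := by
    intro gh gh' h
    have h' := congrArg Subtype.val h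
    simp only [F] at h'
    have h1 : gh.1 = gh'.1 := by
      have := congrFun h' (p i0)
      rw [key gh i0, key gh' i0] at this
      simpa using this
    have h2 : gh.2 = gh'.2 := by
      funext x
      have hx : ¬∃ i, p i = (x : Fin m₀) := by
        intro ⟨i, hi⟩; exact x.2 ⟨i, hi⟩
      have := congrFun h' (x : Fin m₀)
      rw [Function.extend_apply' _ _ _ hx, Function.extend_apply' _ _ _ hx,
        dif_neg (fun hh => x.2 hh), dif_neg (fun hh => x.2 hh)] at this
      exact this
    exact Prod.ext h1 h2
  calc α ^ (m₀ - t) * α = Nat.card (ZMod α × (↥(Set.range p)ᶜ → ZMod α)) := by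
        rw [hcardD]; ring
    _ ≤ _ := Nat.card_le_card_of_injective F hF

lemma key_lemma {α t : ℕ} (hα : 2 ≤ α) (ht : 2 ≤ t) (m n' : ℕ) (hm : t ≤ m)
    (hnum : (2*m)^t * α^t * (α^t - α)^n' ≤ m * (α^t)^n') :
    ∃ M : Fin m → Fin (n' * α) → Fin α, IsCoveringArray m (n' * α) α t M := by
  classical
  haveI : NeZero α := ⟨by omega⟩
  set m₀ := 2 * m with hm₀
  have htm₀ : t ≤ m₀ := by omega
  set bad : (Fin n' → Fin m₀ → ZMod α) → (Fin t → Fin m₀) × (Fin t → ZMod α) → Prop :=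
    fun B x => Function.Injective x.1 ∧ ∀ q, ¬ ∃ g, ∀ i, B q (x.1 i) + g = x.2 i with hbad
  set badF : (Fin n' → Fin m₀ → ZMod α) → Finset ((Fin t → Fin m₀) × (Fin t → ZMod α)) :=
    fun B => Finset.univ.filter (bad B) with hbadF
  set Z : ℕ := (α ^ (m₀ - t) * (α^t - α)) ^ n' with hZ
  have hsplit : α ^ m₀ = α ^ (m₀ - t) * α ^ t := by
    rw [← pow_add]; congr 1; omega
  have count1 : ∀ x : (Fin t → Fin m₀) × (Fin t → ZMod α),
      (Finset.univ.filter (fun B => bad B x)).card ≤ Z := by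
    intro x
    by_cases hinj : Function.Injective x.1
    · have hgood := good_count_le (α := α) (m₀ := m₀) (t := t) (show 1 ≤ α by omega)
        (show 1 ≤ t by omega) x.1 hinj x.2
      have sub1 : (Finset.univ.filter (fun B => bad B x)) ⊆
          (Finset.univ.filter
            (fun B : Fin n' → Fin m₀ → ZMod α => ∀ q, ¬ ∃ g, ∀ i, B q (x.1 i) + g = x.2 i)) := by
        intro B hB
        rw [Finset.mem_filter] at hB ⊢
        exact ⟨hB.1, hB.2.2⟩
      refine le_trans (Finset.card_le_card sub1) ?_
      have e1 : {B : Fin n' → Fin m₀ → ZMod α // ∀ q, ¬ ∃ g, ∀ i, B q (x.1 i) + g = x.2 i} ≃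
          (Fin n' → {c : Fin m₀ → ZMod α // ¬ ∃ g, ∀ i, c (x.1 i) + g = x.2 i}) :=
        Equiv.subtypePiEquivPi (p := fun (_ : Fin n') (c : Fin m₀ → ZMod α) => ¬ ∃ g, ∀ i, c (x.1 i) + g = x.2 i)
      have hcompl : Nat.card {c : Fin m₀ → ZMod α // ¬ ∃ g, ∀ i, c (x.1 i) + g = x.2 i}
          = α ^ m₀ - Nat.card {c : Fin m₀ → ZMod α // ∃ g, ∀ i, c (x.1 i) + g = x.2 i} := by
        rw [Nat.card_eq_fintype_card, Nat.card_eq_fintype_card, Fintype.card_subtype_compl,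
          Fintype.card_fun, ZMod.card, Fintype.card_fin]
      calc (Finset.univ.filter
            (fun B : Fin n' → Fin m₀ → ZMod α => ∀ q, ¬ ∃ g, ∀ i, B q (x.1 i) + g = x.2 i)).card
          = Nat.card {B : Fin n' → Fin m₀ → ZMod α // ∀ q, ¬ ∃ g, ∀ i, B q (x.1 i) + g = x.2 i} := by
            rw [Nat.card_eq_fintype_card, Fintype.card_subtype]
        _ = Nat.card (Fin n' → {c : Fin m₀ → ZMod α // ¬ ∃ g, ∀ i, c (x.1 i) + g = x.2 i}) :=
            Nat.card_congr e1
        _ = Nat.card {c : Fin m₀ → ZMod α // ¬ ∃ g, ∀ i, c (x.1 i) + g = x.2 i} ^ n' := by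
            rw [Nat.card_fun, Nat.card_eq_fintype_card (α := Fin n'), Fintype.card_fin]
        _ ≤ (α ^ (m₀ - t) * (α^t - α)) ^ n' := by
            apply Nat.pow_le_pow_left
            rw [hcompl, Nat.mul_sub, ← hsplit]
            exact Nat.sub_le_sub_left hgood _
    · have : (Finset.univ.filter (fun B => bad B x)) = ∅ := by
        apply Finset.filter_false_of_mem
        intro B _ hB
        exact hinj hB.1
      rw [this]
      simp
  have hcardΩ : Fintype.card (Fin n' → Fin m₀ → ZMod α) = (α ^ m₀) ^ n' := by
    simp [Fintype.card_fun, ZMod.card]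
  have avg : ∃ B : Fin n' → Fin m₀ → ZMod α, (badF B).card ≤ m := by
    by_contra hcon
    push_neg at hcon
    have hsum1 : (Fintype.card (Fin n' → Fin m₀ → ZMod α)) * (m + 1)
        ≤ ∑ B : Fin n' → Fin m₀ → ZMod α, (badF B).card := by
      rw [← Finset.card_univ, ← smul_eq_mul, ← Finset.sum_const]
      exact Finset.sum_le_sum (fun B _ => hcon B)
    have hsum2 : ∑ B : Fin n' → Fin m₀ → ZMod α, (badF B).card
        ≤ (Fintype.card ((Fin t → Fin m₀) × (Fin t → ZMod α))) * Z := by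
      have swap : ∑ B : Fin n' → Fin m₀ → ZMod α, (badF B).card
          = ∑ x : (Fin t → Fin m₀) × (Fin t → ZMod α),
              (Finset.univ.filter (fun B => bad B x)).card := by
        simp only [hbadF, Finset.card_filter]
        rw [Finset.sum_comm]
      rw [swap, ← Finset.card_univ, ← smul_eq_mul, ← Finset.sum_const]
      exact Finset.sum_le_sum (fun x _ => count1 x)
    have hcardT : Fintype.card ((Fin t → Fin m₀) × (Fin t → ZMod α)) = m₀ ^ t * α ^ t := by
      simp [Fintype.card_fun, ZMod.card]
    have hfinal : (Fintype.card ((Fin t → Fin m₀) × (Fin t → ZMod α))) * Z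
        ≤ Fintype.card (Fin n' → Fin m₀ → ZMod α) * m := by
      rw [hcardT, hcardΩ, hZ, hsplit]
      calc m₀ ^ t * α ^ t * (α ^ (m₀ - t) * (α ^ t - α)) ^ n'
          = (m₀ ^ t * α ^ t * (α^t - α)^n') * (α ^ (m₀ - t)) ^ n' := by
            rw [mul_pow]; ring
        _ ≤ (m * (α^t)^n') * (α ^ (m₀ - t)) ^ n' := Nat.mul_le_mul_right _ hnum
        _ = (α ^ (m₀ - t) * α ^ t) ^ n' * m := by rw [mul_pow]; ring
    have hle : Fintype.card (Fin n' → Fin m₀ → ZMod α) * (m+1)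
        ≤ Fintype.card (Fin n' → Fin m₀ → ZMod α) * m :=
      le_trans hsum1 (le_trans hsum2 hfinal)
    have hΩpos : 0 < Fintype.card (Fin n' → Fin m₀ → ZMod α) := Fintype.card_pos
    have := Nat.le_of_mul_le_mul_left hle hΩpos
    omega
  obtain ⟨B, hB⟩ := avg
  set i0 : Fin t := ⟨0, by omega⟩ with hi0
  set Del : Finset (Fin m₀) := (badF B).image (fun x => x.1 i0) with hDel
  have hDelcard : Del.card ≤ m := le_trans (Finset.card_image_le) hB
  have hRcard : m ≤ (Finset.univ \ Del).card := by
    rw [Finset.card_sdiff_of_subset (Finset.subset_univ Del), Finset.card_univ, Fintype.card_fin]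
    omega
  obtain ⟨S, hSsub, hScard⟩ := Finset.exists_subset_card_eq hRcard
  set ι := S.orderEmbOfFin hScard with hι
  have hιmem : ∀ i, ι i ∈ Finset.univ \ Del := fun i => hSsub (Finset.orderEmbOfFin_mem S hScard i)
  set e : ZMod α ≃ Fin α := Fintype.equivFinOfCardEq (ZMod.card α) with he
  set e2 : Fin n' × Fin α ≃ Fin (n' * α) := finProdFinEquiv with he2
  refine ⟨fun i j => e (B (e2.symm j).1 (ι i) + e.symm (e2.symm j).2), ?_⟩
  intro p hp v
  have hp' : Function.Injective (fun i => ι (p i)) := fun a b hab => hp (ι.injective hab)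
  have hnotbad : ¬ bad B (fun i => ι (p i), fun i => e.symm (v i)) := by
    intro hbad'
    have hmem : ((fun i => ι (p i), fun i => e.symm (v i))
        : (Fin t → Fin m₀) × (Fin t → ZMod α)) ∈ badF B := by
      rw [hbadF, Finset.mem_filter]
      exact ⟨Finset.mem_univ _, hbad'⟩
    have hd : ι (p i0) ∈ Del := Finset.mem_image.mpr ⟨_, hmem, rfl⟩
    have hr := hιmem (p i0)
    rw [Finset.mem_sdiff] at hr
    exact hr.2 hd
  rw [hbad] at hnotbad
  have hnot2 : ¬ ∀ q : Fin n', ¬ ∃ g, ∀ i, B q (ι (p i)) + g = e.symm (v i) := by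
    intro hall
    exact hnotbad ⟨hp', hall⟩
  push_neg at hnot2
  obtain ⟨q, g, hqg⟩ := hnot2
  refine ⟨e2 (q, e g), fun i => ?_⟩
  show e (B (e2.symm (e2 (q, e g))).1 (ι (p i)) + e.symm (e2.symm (e2 (q, e g))).2) = v i
  rw [Equiv.symm_apply_apply]
  show e (B q (ι (p i)) + e.symm (e g)) = v i
  rw [Equiv.symm_apply_apply, hqg i, Equiv.apply_symm_apply]

theorem stmt_9 (α t : ℕ) (hα : 2 ≤ α) (ht : 2 ≤ t) :
    ∃ C : ℝ, C = (α : ℝ) * ((t : ℝ) - 1) /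
        Real.logb 2 ((α : ℝ) ^ (t - 1) / ((α : ℝ) ^ (t - 1) - 1)) ∧
      ∃ f : ℕ → ℝ, Tendsto f atTop (nhds 0) ∧
        ∀ᶠ m in atTop, ∃ (n : ℕ) (M : Fin m → Fin n → Fin α),
          IsCoveringArray m n α t M ∧ (n : ℝ) ≤ C * Real.logb 2 m * (1 + f m) := by
  refine ⟨_, rfl, ?_⟩
  have hA2 : (2:ℝ) ≤ (α:ℝ) := by exact_mod_cast hα
  have hA1 : (1:ℝ) < (α:ℝ) := by linarith
  have hA0 : (0:ℝ) < (α:ℝ) := by linarith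
  set β : ℝ := (α:ℝ) ^ (t - 1) with hβ
  have hβ2 : (2:ℝ) ≤ β := by
    have h1 : 1 ≤ t - 1 := by omega
    calc (2:ℝ) ≤ (α:ℝ) := hA2
      _ = (α:ℝ) ^ 1 := (pow_one _).symm
      _ ≤ β := pow_le_pow_right₀ (le_of_lt hA1) h1
  have hβ1 : (0:ℝ) < β - 1 := by linarith
  have hβ0 : (0:ℝ) < β := by linarith
  have hfrac1 : 1 < β / (β - 1) := by
    rw [lt_div_iff₀ hβ1]; linarith
  set lam : ℝ := Real.log (β / (β - 1)) with hlam
  have hlampos : 0 < lam := Real.log_pos hfrac1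
  have hlog2 : (0:ℝ) < Real.log 2 := Real.log_pos (by norm_num)
  have hlogbpos : 0 < Real.logb 2 (β / (β - 1)) := Real.logb_pos (by norm_num) hfrac1
  have ht1 : (1:ℝ) ≤ (t:ℝ) - 1 := by
    have h2 : (2:ℝ) ≤ (t:ℝ) := by exact_mod_cast ht
    linarith
  set C : ℝ := (α : ℝ) * ((t : ℝ) - 1) / Real.logb 2 (β / (β - 1)) with hC
  have hCpos : 0 < C := div_pos (mul_pos hA0 (by linarith)) hlogbpos
  set K : ℝ := t * Real.log 2 + t * Real.log α with hK
  have hK0 : 0 ≤ K := by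
    have h2 : 0 ≤ Real.log (α:ℝ) := Real.log_nonneg (by linarith)
    have h3 : (0:ℝ) ≤ (t:ℝ) := by positivity
    nlinarith
  set E : ℝ := ((α:ℝ) * K / lam + α) / C with hE
  refine ⟨fun m : ℕ => E / Real.logb 2 m, ?_, ?_⟩
  · exact Filter.Tendsto.div_atTop tendsto_const_nhds
      ((Real.tendsto_logb_atTop (by norm_num)).comp tendsto_natCast_atTop_atTop)
  · filter_upwards [eventually_ge_atTop (max t 2)] with m hm
    have hmt : t ≤ m := le_trans (le_max_left _ _) hm
    have hm2 : 2 ≤ m := le_trans (le_max_right _ _) hm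
    have hm1 : (1:ℝ) < (m:ℝ) := by exact_mod_cast (by omega : 1 < m)
    have hm0 : (0:ℝ) < (m:ℝ) := by linarith
    have hlogm0 : 0 ≤ Real.log m := Real.log_nonneg (le_of_lt hm1)
    set x : ℝ := (((t:ℝ) - 1) * Real.log m + K) / lam with hx
    have hx0 : 0 ≤ x := div_nonneg
      (add_nonneg (mul_nonneg (by linarith) hlogm0) hK0) (le_of_lt hlampos)
    set n' : ℕ := ⌈x⌉₊ with hn'
    have hxn' : x ≤ (n' : ℝ) := Nat.le_ceil x
    have hn'x : (n' : ℝ) < x + 1 := Nat.ceil_lt_add_one hx0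
    have hts : t - 1 + 1 = t := by omega
    have hAt : (α:ℝ)^t = β * (α:ℝ) := by rw [hβ, ← pow_succ, hts]
    have hαt : α ≤ α ^ t := Nat.le_self_pow (by omega) α
    have hfact : ((α:ℝ)^t - (α:ℝ)) = ((β - 1)/β) * (α:ℝ)^t := by
      rw [hAt]; field_simp
    have hlogρ : Real.log ((β-1)/β) = -lam := by
      rw [Real.log_div (by linarith) (by linarith), hlam,
        Real.log_div (by linarith) (by linarith)]
      ring
    have hn'lam : ((t:ℝ) - 1) * Real.log m + K ≤ (n':ℝ) * lam := by
      rw [hx] at hxn'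
      calc ((t:ℝ) - 1) * Real.log m + K = ((((t:ℝ) - 1) * Real.log m + K) / lam) * lam := by
            field_simp
        _ ≤ (n':ℝ) * lam := mul_le_mul_of_nonneg_right hxn' (le_of_lt hlampos)
    have hcentral : ((2:ℝ)*(m:ℝ))^t * (α:ℝ)^t * ((β-1)/β)^n' ≤ (m:ℝ) := by
      have hρ0 : (0:ℝ) < (β-1)/β := by positivity
      have hlhs_pos : 0 < ((2:ℝ)*(m:ℝ))^t * (α:ℝ)^t * ((β-1)/β)^n' := by positivity
      rw [← Real.log_le_log_iff hlhs_pos hm0]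
      rw [Real.log_mul (by positivity) (by positivity), Real.log_mul (by positivity) (by positivity),
        Real.log_pow, Real.log_pow, Real.log_mul (by norm_num) (by positivity), Real.log_pow,
        hlogρ]
      have hKdef := hK
      nlinarith [hn'lam]
    have hnumR : ((2:ℝ)*(m:ℝ))^t * (α:ℝ)^t * ((α:ℝ)^t - (α:ℝ))^n' ≤ (m:ℝ) * ((α:ℝ)^t)^n' := by
      calc ((2:ℝ)*(m:ℝ))^t * (α:ℝ)^t * ((α:ℝ)^t - (α:ℝ))^n'
          = (((2:ℝ)*(m:ℝ))^t * (α:ℝ)^t * ((β-1)/β)^n') * ((α:ℝ)^t)^n' := by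
            rw [hfact, mul_pow, mul_pow, ← mul_assoc]
        _ ≤ (m:ℝ) * ((α:ℝ)^t)^n' := by
            apply mul_le_mul_of_nonneg_right hcentral (by positivity)
    have hnum : (2*m)^t * α^t * (α^t - α)^n' ≤ m * (α^t)^n' := by
      have := hnumR
      rw [show ((α:ℝ)^t - (α:ℝ)) = ((α^t - α : ℕ):ℝ) by push_cast [Nat.cast_sub hαt]; ring] at this
      exact_mod_cast this
    obtain ⟨M, hM⟩ := key_lemma hα ht m n' hmt hnum
    refine ⟨n' * α, M, hM, ?_⟩
    have hlogbm : Real.logb 2 (m:ℝ) = Real.log m / Real.log 2 := Real.log_div_log.symm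
    have hlogbmpos : 0 < Real.logb 2 (m:ℝ) := Real.logb_pos (by norm_num) hm1
    have hCE : C * E = (α:ℝ)*K/lam + (α:ℝ) := by
      rw [hE, mul_div_cancel₀ _ (ne_of_gt hCpos)]
    have hClogb : C * Real.logb 2 (m:ℝ) = (α:ℝ) * ((t:ℝ)-1) * Real.log m / lam := by
      have e1 : Real.logb 2 (β/(β-1)) = lam / Real.log 2 := by rw [← Real.log_div_log]
      rw [hC, e1, hlogbm]
      field_simp
    calc ((n' * α : ℕ):ℝ) = (n':ℝ) * (α:ℝ) := by push_cast; ring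
      _ ≤ (x + 1) * (α:ℝ) := mul_le_mul_of_nonneg_right (le_of_lt hn'x) (by positivity)
      _ = (α:ℝ)*((t:ℝ)-1)*Real.log m/lam + ((α:ℝ)*K/lam + (α:ℝ)) := by
          rw [hx]; field_simp; ring
      _ = C * Real.logb 2 (m:ℝ) + C * E := by rw [hClogb, hCE]
      _ = C * Real.logb 2 (m:ℝ) * (1 + E / Real.logb 2 (m:ℝ)) := by
          field_simp
end

section
/- For any probability space with events C_1,...,C_K, each of probability at most p, each mutually independent of all but at most d of the others, if e·p·(d+1) ≤ 1 then P(⋂_{k=1}^K C_k^c) > 0. -/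
open MeasureTheory ProbabilityTheory

/-- The symmetric Lovász Local Lemma. -/
theorem stmt_15 {Ω : Type*} [MeasurableSpace Ω] (μ : Measure Ω) [IsProbabilityMeasure μ]
    (K : ℕ) (C : Fin K → Set Ω) (hmeas : ∀ k, MeasurableSet (C k))
    (p : ℝ) (d : ℕ)
    (hp : ∀ k, (μ (C k)).toReal ≤ p)
    (hindep : ∀ i : Fin K, ∃ J : Finset (Fin K), i ∉ J ∧
      (Finset.univ \ insert i J).card ≤ d ∧
      Indep (MeasurableSpace.generateFrom {C i})
        (MeasurableSpace.generateFrom {s | ∃ j ∈ J, s = C j}) μ)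
    (hcond : Real.exp 1 * p * (d + 1) ≤ 1) :
    0 < μ (⋂ k, (C k)ᶜ) := by
  classical
  -- the parameter
  set x : ℝ := ((d : ℝ) + 2)⁻¹ with hxdef
  have hd1 : (0:ℝ) < (d:ℝ) + 1 := by positivity
  have hd2 : (0:ℝ) < (d:ℝ) + 2 := by positivity
  have hx0 : 0 < x := by positivity
  have hx1 : x < 1 := by
    rw [hxdef]
    rw [inv_lt_one_iff₀]
    right; linarith
  have h1x : 0 < 1 - x := by linarith
  have h1x1 : 1 - x ≤ 1 := by linarith
  have hexp : 0 < Real.exp 1 := Real.exp_pos 1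
  -- p ≤ x * (1-x)^d
  have hpe : p ≤ 1 / (Real.exp 1 * ((d:ℝ) + 1)) := by
    rw [le_div_iff₀ (by positivity)]
    nlinarith [hcond]
  have hkey_exp : (((d:ℝ) + 2) / ((d:ℝ) + 1)) ^ (d + 1) ≤ Real.exp 1 := by
    have ht : ((d:ℝ) + 2) / ((d:ℝ) + 1) = ((d:ℝ)+1)⁻¹ + 1 := by
      field_simp
      ring
    have h1 : ((d:ℝ)+1)⁻¹ + 1 ≤ Real.exp (((d:ℝ)+1)⁻¹) := Real.add_one_le_exp _
    have h2 : (((d:ℝ) + 2) / ((d:ℝ) + 1)) ^ (d + 1) ≤ (Real.exp (((d:ℝ)+1)⁻¹)) ^ (d + 1) := by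
      apply pow_le_pow_left₀ (by positivity) (by rw [ht]; exact h1)
    refine h2.trans ?_
    rw [← Real.exp_nat_mul]
    have : ((d:ℕ) + 1 : ℕ) * (((d:ℝ)+1)⁻¹) = 1 := by
      push_cast
      field_simp
    rw [show ((((d:ℕ)+1 : ℕ)):ℝ) * (((d:ℝ)+1)⁻¹) = 1 from this]
  have hratio : ((Real.exp 1)⁻¹ : ℝ) ≤ (((d:ℝ) + 1) / ((d:ℝ) + 2)) ^ (d + 1) := by
    have hb : (((d:ℝ) + 1) / ((d:ℝ) + 2)) ^ (d + 1)
        = ((((d:ℝ) + 2) / ((d:ℝ) + 1)) ^ (d + 1))⁻¹ := by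
      rw [← inv_pow]
      congr 1
      rw [inv_div]
    rw [hb]
    exact inv_anti₀ (by positivity) hkey_exp
  have hpx : p ≤ x * (1 - x) ^ d := by
    have h1mx : 1 - x = ((d:ℝ) + 1) / ((d:ℝ) + 2) := by
      rw [hxdef]; field_simp; ring
    have hstep : (((d:ℝ)+1)/((d:ℝ)+2))^(d+1)/((d:ℝ)+1)
        = (1/((d:ℝ)+2)) * (((d:ℝ)+1)/((d:ℝ)+2))^d := by
      rw [pow_succ]
      field_simp
    have heq : x * (1 - x) ^ d = (((d:ℝ) + 1) / ((d:ℝ) + 2)) ^ (d + 1) / ((d:ℝ) + 1) := by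
      rw [hstep, h1mx, hxdef, one_div]
    rw [heq]
    refine hpe.trans ?_
    calc 1 / (Real.exp 1 * ((d:ℝ)+1)) = (Real.exp 1)⁻¹ * (1/((d:ℝ)+1)) := by
          field_simp
      _ ≤ (((d:ℝ) + 1) / ((d:ℝ) + 2)) ^ (d + 1) * (1/((d:ℝ)+1)) :=
          mul_le_mul_of_nonneg_right hratio (by positivity)
      _ = (((d:ℝ) + 1) / ((d:ℝ) + 2)) ^ (d + 1) / ((d:ℝ)+1) := by
          ring
  -- measurability of finite intersections of complements
  have hTmeas : ∀ S : Finset (Fin K), MeasurableSet (⋂ j ∈ S, (C j)ᶜ) := fun S =>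
    S.measurableSet_biInter (fun j _ => (hmeas j).compl)
  -- splitting identity
  have split : ∀ (A T : Set Ω), MeasurableSet A →
      (μ ((A)ᶜ ∩ T)).toReal = (μ T).toReal - (μ (A ∩ T)).toReal := by
    intro A T hA
    have h := measure_inter_add_diff (μ := μ) T hA
    have hfin1 : μ (T ∩ A) ≠ ⊤ := measure_ne_top μ _
    have hfin2 : μ (T \ A) ≠ ⊤ := measure_ne_top μ _
    have h' : (μ (T ∩ A)).toReal + (μ (T \ A)).toReal = (μ T).toReal := by
      rw [← ENNReal.toReal_add hfin1 hfin2, h]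
    have e1 : T \ A = Aᶜ ∩ T := by
      rw [Set.diff_eq, Set.inter_comm]
    have e2 : T ∩ A = A ∩ T := Set.inter_comm _ _
    rw [e1, e2] at h'
    linarith
  -- the key induction
  have key : ∀ n : ℕ, ∀ S : Finset (Fin K), S.card ≤ n → ∀ i, i ∉ S →
      (μ (C i ∩ ⋂ j ∈ S, (C j)ᶜ)).toReal ≤ x * (μ (⋂ j ∈ S, (C j)ᶜ)).toReal := by
    intro n
    induction n with
    | zero =>
      intro S hS i _
      have hSe : S = ∅ := Finset.card_eq_zero.mp (Nat.le_zero.mp hS)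
      subst hSe
      simp only [Finset.notMem_empty, Set.iInter_of_empty, Set.iInter_univ, Set.inter_univ,
        measure_univ, ENNReal.toReal_one, mul_one]
      refine (hp i).trans (hpx.trans ?_)
      calc x * (1-x)^d ≤ x * 1 := by
            apply mul_le_mul_of_nonneg_left (pow_le_one₀ h1x.le h1x1) hx0.le
        _ = x := mul_one x
    | succ n IH =>
      intro S hS i hi
      obtain ⟨J, hiJ, hcard, hind⟩ := hindep i
      set S₁ : Finset (Fin K) := S ∩ J with hS₁def
      set S₂ : Finset (Fin K) := S \ J with hS₂def
      have hS₁S : S₁ ⊆ S := Finset.inter_subset_left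
      have hS₂S : S₂ ⊆ S := Finset.sdiff_subset
      have hS₂d : S₂.card ≤ d := by
        refine le_trans (Finset.card_le_card ?_) hcard
        intro j hj
        have hj' : j ∈ S ∧ j ∉ J := Finset.mem_sdiff.mp hj
        simp only [Finset.mem_sdiff, Finset.mem_univ, Finset.mem_insert, true_and]
        rintro (rfl | hjJ)
        · exact hi hj'.1
        · exact hj'.2 hjJ
      set B : Set Ω := ⋂ j ∈ S₁, (C j)ᶜ with hBdef
      have hBmeas : MeasurableSet B := hTmeas S₁
      have hBm₂ : MeasurableSet[MeasurableSpace.generateFrom {s | ∃ j ∈ J, s = C j}] B := by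
        refine Finset.measurableSet_biInter _ (fun j hj => ?_)
        have hjJ : j ∈ J := (Finset.mem_inter.mp hj).2
        have hmem : C j ∈ {s : Set Ω | ∃ j' ∈ J, s = C j'} := ⟨j, hjJ, rfl⟩
        exact (MeasurableSpace.measurableSet_generateFrom hmem).compl
      have hCiB : μ (C i ∩ B) = μ (C i) * μ B := by
        have h1 : MeasurableSet[MeasurableSpace.generateFrom {C i}] (C i) :=
          MeasurableSpace.measurableSet_generateFrom rfl
        exact (hind.indepSet_of_measurableSet h1 hBm₂).measure_inter_eq_mul
      -- peeling lemma
      have peel : ∀ U : Finset (Fin K), U ⊆ S₂ →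
          (1-x)^U.card * (μ B).toReal ≤ (μ (⋂ j ∈ S₁ ∪ U, (C j)ᶜ)).toReal := by
        intro U
        induction U using Finset.induction_on with
        | empty =>
          intro _
          simp only [Finset.union_empty, Finset.card_empty, pow_zero, one_mul, ← hBdef, le_refl]
        | @insert a U haU ih =>
          intro hsub
          have haS₂ : a ∈ S₂ := hsub (Finset.mem_insert_self a U)
          have hUS₂ : U ⊆ S₂ := fun u hu => hsub (Finset.mem_insert_of_mem hu)
          have haS : a ∈ S := hS₂S haS₂
          have haJ : a ∉ J := (Finset.mem_sdiff.mp haS₂).2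
          have ha1 : a ∉ S₁ ∪ U := by
            rw [Finset.mem_union]
            rintro (h | h)
            · exact haJ (Finset.mem_inter.mp h).2
            · exact haU h
          have hcard' : (S₁ ∪ U).card ≤ n := by
            have hsub' : S₁ ∪ U ⊆ S.erase a := by
              intro j hj
              rw [Finset.mem_erase]
              constructor
              · rintro rfl; exact ha1 hj
              · rcases Finset.mem_union.mp hj with h | h
                · exact hS₁S h
                · exact hS₂S (hUS₂ h)
            have := Finset.card_le_card hsub'
            rw [Finset.card_erase_of_mem haS] at this
            omega
          have hIH := IH (S₁ ∪ U) hcard' a ha1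
          have hset : (⋂ j ∈ S₁ ∪ insert a U, (C j)ᶜ) = (C a)ᶜ ∩ ⋂ j ∈ S₁ ∪ U, (C j)ᶜ := by
            rw [Finset.union_insert, Finset.set_biInter_insert]
          rw [hset, split (C a) _ (hmeas a), Finset.card_insert_of_notMem haU]
          have hV := ih hUS₂
          set v : ℝ := (μ (⋂ j ∈ S₁ ∪ U, (C j)ᶜ)).toReal with hvdef
          have hexpand : (1-x) * v = v - x * v := by ring
          calc (1-x)^(U.card+1) * (μ B).toReal
              = (1-x) * ((1-x)^U.card * (μ B).toReal) := by ring
            _ ≤ (1-x) * v := mul_le_mul_of_nonneg_left hV h1x.le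
            _ = v - x * v := hexpand
            _ ≤ v - (μ (C a ∩ ⋂ j ∈ S₁ ∪ U, (C j)ᶜ)).toReal := by linarith
      -- assemble
      have hS12 : S₁ ∪ S₂ = S := by
        rw [hS₁def, hS₂def, Finset.union_comm]
        exact Finset.sdiff_union_inter S J
      have hpeelS : (1-x)^S₂.card * (μ B).toReal ≤ (μ (⋂ j ∈ S, (C j)ᶜ)).toReal := by
        have := peel S₂ (le_refl _)
        rwa [hS12] at this
      have hTB : (⋂ j ∈ S, (C j)ᶜ) ⊆ B := by
        rw [hBdef]
        intro ω hω
        simp only [Set.mem_iInter] at hω ⊢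
        exact fun j hj => hω j (hS₁S hj)
      have hmono : (μ (C i ∩ ⋂ j ∈ S, (C j)ᶜ)).toReal ≤ (μ (C i ∩ B)).toReal :=
        ENNReal.toReal_mono (measure_ne_top μ _)
          (measure_mono (Set.inter_subset_inter_right _ hTB))
      have hpow : (1-x)^d ≤ (1-x)^S₂.card := pow_le_pow_of_le_one h1x.le h1x1 hS₂d
      calc (μ (C i ∩ ⋂ j ∈ S, (C j)ᶜ)).toReal
          ≤ (μ (C i ∩ B)).toReal := hmono
        _ = (μ (C i)).toReal * (μ B).toReal := by rw [hCiB, ENNReal.toReal_mul]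
        _ ≤ p * (μ B).toReal :=
            mul_le_mul_of_nonneg_right (hp i) ENNReal.toReal_nonneg
        _ ≤ (x * (1-x)^d) * (μ B).toReal :=
            mul_le_mul_of_nonneg_right hpx ENNReal.toReal_nonneg
        _ ≤ (x * (1-x)^S₂.card) * (μ B).toReal := by
            apply mul_le_mul_of_nonneg_right _ ENNReal.toReal_nonneg
            exact mul_le_mul_of_nonneg_left hpow hx0.le
        _ = x * ((1-x)^S₂.card * (μ B).toReal) := by ring
        _ ≤ x * (μ (⋂ j ∈ S, (C j)ᶜ)).toReal :=
            mul_le_mul_of_nonneg_left hpeelS hx0.le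
  -- positivity by induction
  have pos : ∀ S : Finset (Fin K), 0 < (μ (⋂ j ∈ S, (C j)ᶜ)).toReal := by
    intro S
    induction S using Finset.induction_on with
    | empty => simp
    | @insert a S' ha ih =>
      rw [Finset.set_biInter_insert, split (C a) _ (hmeas a)]
      have hk := key S'.card S' le_rfl a ha
      nlinarith [mul_pos h1x ih]
  have hfinal := pos Finset.univ
  have heq : (⋂ k, (C k)ᶜ) = ⋂ j ∈ Finset.univ, (C j)ᶜ := by simp
  rw [heq]
  rw [pos_iff_ne_zero]
  intro hzero
  rw [hzero] at hfinal
  simp at hfinal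
end
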